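/- Let B(z) = ∏_{j=1}^n (z − z_j)/(1 − conj(z_j) z) be a finite Blaschke product with all z_j in the open unit disk. Then for each λ on the unit circle, the equation z·B(z) = conj(λ) has exactly n+1 distinct solutions, all lying on the unit circle. -/

import Mathlib

open Finset Polynomial Complex

lemma normSq_identity (a w : ℂ) :
    normSq (1 - (starRingEnd ℂ) a * w) - normSq (w - a)
      = (1 - normSq w) * (1 - normSq a) := by
  simp only [normSq_apply, sub_re, sub_im, mul_re, mul_im, one_re, one_im,
    conj_re, conj_im]
  ring

lemma term_real (a u : ℂ) (hu : ‖u‖ = 1) (ha : ‖a‖ < 1) :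
    u / (u - a) + u * (starRingEnd ℂ) a / (1 - (starRingEnd ℂ) a * u)
      = (((1 - normSq a) / normSq (u - a) : ℝ) : ℂ) := by
  have hu0 : u ≠ 0 := by intro h; rw [h] at hu; simp at hu
  have hua : u - a ≠ 0 := by
    intro h
    rw [sub_eq_zero.mp h] at hu; exact absurd hu (ne_of_lt ha)
  have hden : 1 - (starRingEnd ℂ) a * u ≠ 0 := by
    intro h
    have h1 : (starRingEnd ℂ) a * u = 1 := by linear_combination -h
    have h2 : ‖(starRingEnd ℂ) a * u‖ = 1 := by rw [h1]; simp
    rw [norm_mul, RCLike.norm_conj, hu, mul_one] at h2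
    exact absurd h2 (ne_of_lt ha)
  have hconj : (starRingEnd ℂ) u = u⁻¹ := (inv_eq_conj hu).symm
  have hN0 : ((normSq (u - a) : ℝ) : ℂ) ≠ 0 := by
    simpa using hua
  have h1 : ((normSq (u - a) : ℝ) : ℂ)
      = (u - a) * ((starRingEnd ℂ) u - (starRingEnd ℂ) a) := by
    rw [← map_sub, mul_conj]
  have h2 : ((1 - normSq a : ℝ) : ℂ) = 1 - a * (starRingEnd ℂ) a := by
    push_cast
    rw [mul_conj]
  have claim : ((normSq (u - a) : ℝ) : ℂ)
      * (u / (u - a) + u * (starRingEnd ℂ) a / (1 - (starRingEnd ℂ) a * u))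
      = ((1 - normSq a : ℝ) : ℂ) := by
    rw [h1, h2, hconj]
    have hden' : 1 - u * (starRingEnd ℂ) a ≠ 0 := by rwa [mul_comm]
    field_simp
    ring
  push_cast
  rw [eq_div_iff hN0]
  push_cast at claim
  linear_combination claim

lemma factor_le (a u : ℂ) (ha : ‖a‖ < 1) (hu : ‖u‖ < 1) :
    ‖u - a‖ ≤ ‖1 - (starRingEnd ℂ) a * u‖ := by
  have h := normSq_identity a u
  simp only [normSq_eq_norm_sq] at h
  have h1 : ‖u‖ ^ 2 < 1 := by nlinarith [norm_nonneg u]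
  have h2 : ‖a‖ ^ 2 < 1 := by nlinarith [norm_nonneg a]
  nlinarith [norm_nonneg (u - a), norm_nonneg (1 - (starRingEnd ℂ) a * u)]

lemma factor_ge (a u : ℂ) (ha : ‖a‖ < 1) (hu : 1 < ‖u‖) :
    ‖1 - (starRingEnd ℂ) a * u‖ ≤ ‖u - a‖ := by
  have h := normSq_identity a u
  simp only [normSq_eq_norm_sq] at h
  have h1 : 1 < ‖u‖ ^ 2 := by nlinarith [norm_nonneg u]
  have h2 : ‖a‖ ^ 2 < 1 := by nlinarith [norm_nonneg a]
  nlinarith [norm_nonneg (u - a), norm_nonneg (1 - (starRingEnd ℂ) a * u)]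

lemma blaschke_root_norm_one {n : ℕ} (z : Fin n → ℂ) (hz : ∀ j, ‖z j‖ < 1)
    (c : ℂ) (hc : ‖c‖ = 1) (u : ℂ)
    (h : u * ∏ j, (u - z j) = c * ∏ j, (1 - (starRingEnd ℂ) (z j) * u)) :
    ‖u‖ = 1 := by
  have hnorm : ‖u‖ * ∏ j, ‖u - z j‖ = ∏ j, ‖1 - (starRingEnd ℂ) (z j) * u‖ := by
    have := congrArg norm h
    simpa [norm_mul, norm_prod, hc] using this
  by_contra hne
  rcases lt_or_gt_of_ne hne with hlt | hgt
  · have hBpos : 0 < ∏ j, ‖1 - (starRingEnd ℂ) (z j) * u‖ := by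
      apply Finset.prod_pos
      intro j _
      rw [norm_pos_iff]
      intro h0
      have h1 : (starRingEnd ℂ) (z j) * u = 1 := by linear_combination -h0
      have h2 : ‖(starRingEnd ℂ) (z j) * u‖ = 1 := by rw [h1]; simp
      rw [norm_mul, RCLike.norm_conj] at h2
      nlinarith [hz j, norm_nonneg u, norm_nonneg (z j)]
    have hle : ∏ j, ‖u - z j‖ ≤ ∏ j, ‖1 - (starRingEnd ℂ) (z j) * u‖ :=
      Finset.prod_le_prod (fun j _ => norm_nonneg _)
        (fun j _ => factor_le (z j) u (hz j) hlt)
    have hApos : 0 < ∏ j, ‖u - z j‖ := by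
      rcases (Finset.prod_nonneg (fun j (_ : j ∈ univ) => norm_nonneg (u - z j))).lt_or_eq with h' | h'
      · exact h'
      · rw [← h', mul_zero] at hnorm; linarith
    nlinarith
  · have hApos : 0 < ∏ j, ‖u - z j‖ := by
      apply Finset.prod_pos
      intro j _
      rw [norm_pos_iff, sub_ne_zero]
      intro h0
      have := hz j
      rw [← h0] at this
      linarith
    have hle : ∏ j, ‖1 - (starRingEnd ℂ) (z j) * u‖ ≤ ∏ j, ‖u - z j‖ :=
      Finset.prod_le_prod (fun j _ => norm_nonneg _)
        (fun j _ => factor_ge (z j) u (hz j) hgt)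
    nlinarith

lemma derivative_finset_prod {ι : Type*} [DecidableEq ι] (s : Finset ι) (f : ι → ℂ[X]) :
    derivative (∏ i ∈ s, f i) = ∑ i ∈ s, (∏ j ∈ s.erase i, f j) * derivative (f i) := by
  induction s using Finset.induction_on with
  | empty => simp
  | insert a s h ih =>
    rw [Finset.prod_insert h, derivative_mul, ih, Finset.sum_insert h,
      Finset.erase_insert h, Finset.mul_sum]
    congr 1
    · ring
    · apply Finset.sum_congr rfl
      intro b hb
      rw [Finset.erase_insert_of_ne (by rintro rfl; exact h hb)]
      rw [Finset.prod_insert (fun hc => h (Finset.mem_of_mem_erase hc))]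
      ring

noncomputable def BPoly (n : ℕ) (z : Fin n → ℂ) (c : ℂ) : ℂ[X] :=
  X * ∏ j, (X - C (z j)) - C c * ∏ j, (1 - C ((starRingEnd ℂ) (z j)) * X)

lemma BPoly_eval (n : ℕ) (z : Fin n → ℂ) (c : ℂ) (u : ℂ) :
    (BPoly n z c).eval u
      = u * ∏ j, (u - z j) - c * ∏ j, (1 - (starRingEnd ℂ) (z j) * u) := by
  simp [BPoly, eval_prod]

lemma left_monic (n : ℕ) (z : Fin n → ℂ) :
    (X * ∏ j, (X - C (z j)) : ℂ[X]).Monic :=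
  monic_X.mul (monic_prod_of_monic _ _ fun j _ => monic_X_sub_C _)

lemma left_natDegree (n : ℕ) (z : Fin n → ℂ) :
    (X * ∏ j, (X - C (z j)) : ℂ[X]).natDegree = n + 1 := by
  rw [monic_X.natDegree_mul (monic_prod_of_monic _ _ fun j _ => monic_X_sub_C _),
    natDegree_prod_of_monic _ _ fun j _ => monic_X_sub_C _]
  simp [add_comm]

lemma right_degree (n : ℕ) (z : Fin n → ℂ) (c : ℂ) :
    (C c * ∏ j, (1 - C ((starRingEnd ℂ) (z j)) * X) : ℂ[X]).degree < (n + 1 : ℕ) := by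
  apply lt_of_le_of_lt (degree_le_natDegree)
  have h1 : (C c * ∏ j, (1 - C ((starRingEnd ℂ) (z j)) * X) : ℂ[X]).natDegree ≤ n := by
    apply le_trans (natDegree_mul_le)
    rw [natDegree_C, zero_add]
    apply le_trans (natDegree_prod_le _ _)
    apply le_trans (Finset.sum_le_card_nsmul _ _ 1 ?_)
    · simp
    · intro j _
      apply le_trans (natDegree_sub_le _ _)
      simp [natDegree_C_mul_le]
      exact le_trans (natDegree_C_mul_le _ _) (by simp)
  exact_mod_cast lt_of_le_of_lt (Nat.cast_le.mpr h1) (by exact_mod_cast Nat.lt_succ_self n)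

lemma BPoly_monic (n : ℕ) (z : Fin n → ℂ) (c : ℂ) : (BPoly n z c).Monic := by
  rw [BPoly, sub_eq_add_neg]
  apply (left_monic n z).add_of_left
  rw [degree_neg]
  calc (C c * ∏ j, (1 - C ((starRingEnd ℂ) (z j)) * X) : ℂ[X]).degree
      < (n + 1 : ℕ) := right_degree n z c
    _ = (X * ∏ j, (X - C (z j)) : ℂ[X]).degree := by
        rw [degree_eq_natDegree (left_monic n z).ne_zero, left_natDegree]

lemma BPoly_natDegree (n : ℕ) (z : Fin n → ℂ) (c : ℂ) :
    (BPoly n z c).natDegree = n + 1 := by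
  rw [BPoly, natDegree_sub_eq_left_of_natDegree_lt, left_natDegree]
  rw [left_natDegree]
  have := right_degree n z c
  rcases eq_or_ne (C c * ∏ j, (1 - C ((starRingEnd ℂ) (z j)) * X) : ℂ[X]) 0 with h | h
  · rw [h]; simp
  · rw [degree_eq_natDegree h] at this
    exact_mod_cast this

lemma BPoly_deriv_ne_zero (n : ℕ) (z : Fin n → ℂ) (hz : ∀ j, ‖z j‖ < 1)
    (c : ℂ) (hc : ‖c‖ = 1) (u : ℂ) (hu : ‖u‖ = 1)
    (hroot : u * ∏ j, (u - z j) = c * ∏ j, (1 - (starRingEnd ℂ) (z j) * u)) :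
    (derivative (BPoly n z c)).eval u ≠ 0 := by
  have hu0 : u ≠ 0 := by intro h; rw [h] at hu; simp at hu
  have hj_ne : ∀ j, u - z j ≠ 0 := by
    intro j h
    have := hz j
    rw [← sub_eq_zero.mp h] at this
    linarith
  have hd_ne : ∀ j, 1 - (starRingEnd ℂ) (z j) * u ≠ 0 := by
    intro j h
    have h1 : (starRingEnd ℂ) (z j) * u = 1 := by linear_combination -h
    have h2 : ‖(starRingEnd ℂ) (z j) * u‖ = 1 := by rw [h1]; simp
    rw [norm_mul, RCLike.norm_conj, hu, mul_one] at h2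
    exact absurd h2 (ne_of_lt (hz j))
  have hAune : (∏ j, (u - z j)) ≠ 0 := Finset.prod_ne_zero_iff.mpr fun j _ => hj_ne j
  have heval : (derivative (BPoly n z c)).eval u
      = (∏ j, (u - z j)) + u * (∑ j, ∏ i ∈ univ.erase j, (u - z i))
        + c * (∑ j, (starRingEnd ℂ) (z j) * ∏ i ∈ univ.erase j, (1 - (starRingEnd ℂ) (z i) * u)) := by
    rw [BPoly, derivative_sub, derivative_mul, derivative_X, derivative_C_mul,
      derivative_finset_prod, derivative_finset_prod]
    simp only [derivative_sub, derivative_one, derivative_C_mul, derivative_X,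
      derivative_sub, mul_one, zero_sub, eval_sub, eval_add, eval_mul, eval_C, eval_X,
      eval_prod, eval_finset_sum, eval_neg, mul_neg, eval_one, one_mul]
    simp only [derivative_C, eval_zero, mul_zero, sub_zero, mul_comm]
    rw [Finset.sum_neg_distrib]
    ring_nf
  set r : Fin n → ℝ := fun j => (1 - normSq (z j)) / normSq (u - z j) with hr
  have hterm : ∀ j, u * (∏ j, (u - z j)) * ((r j : ℝ) : ℂ)
      = u ^ 2 * (∏ i ∈ univ.erase j, (u - z i))
        + c * u * ((starRingEnd ℂ) (z j) * ∏ i ∈ univ.erase j, (1 - (starRingEnd ℂ) (z i) * u)) := by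
    intro j
    rw [hr]
    rw [← term_real (z j) u hu (hz j)]
    have h1 : (u - z j) * ∏ i ∈ univ.erase j, (u - z i) = ∏ j, (u - z j) :=
      Finset.mul_prod_erase univ (fun i => u - z i) (mem_univ j)
    have h2 : (1 - (starRingEnd ℂ) (z j) * u) * ∏ i ∈ univ.erase j, (1 - (starRingEnd ℂ) (z i) * u)
        = ∏ j, (1 - (starRingEnd ℂ) (z j) * u) :=
      Finset.mul_prod_erase univ (fun i => 1 - (starRingEnd ℂ) (z i) * u) (mem_univ j)
    have ha : (u - z j) * (u - z j)⁻¹ = 1 := mul_inv_cancel₀ (hj_ne j)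
    have hb : (1 - (starRingEnd ℂ) (z j) * u) * (1 - (starRingEnd ℂ) (z j) * u)⁻¹ = 1 :=
      mul_inv_cancel₀ (hd_ne j)
    linear_combination (-u ^ 2 * (u - z j)⁻¹) * h1
      + (u ^ 2 * ∏ i ∈ univ.erase j, (u - z i)) * ha
      + (u * (starRingEnd ℂ) (z j) * (1 - (starRingEnd ℂ) (z j) * u)⁻¹) * hroot
      - (u * (starRingEnd ℂ) (z j) * (1 - (starRingEnd ℂ) (z j) * u)⁻¹ * c) * h2
      + (c * u * (starRingEnd ℂ) (z j) * ∏ i ∈ univ.erase j, (1 - (starRingEnd ℂ) (z i) * u)) * hb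
  have hsumpos : (0:ℝ) < 1 + ∑ j, r j := by
    have hnn : ∀ j ∈ univ, (0:ℝ) ≤ r j := by
      intro j _
      apply div_nonneg
      · have := hz j
        have h3 : normSq (z j) < 1 := by
          rw [normSq_eq_norm_sq]; nlinarith [norm_nonneg (z j)]
        linarith
      · exact normSq_nonneg _
    have := Finset.sum_nonneg hnn
    linarith
  have hsum : u * ((derivative (BPoly n z c)).eval u)
      = u * (∏ j, (u - z j)) * (((1 + ∑ j, r j : ℝ)) : ℂ) := by
    calc u * ((derivative (BPoly n z c)).eval u)
        = u * ((∏ j, (u - z j)) + u * (∑ j, ∏ i ∈ univ.erase j, (u - z i))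
            + c * (∑ j, (starRingEnd ℂ) (z j)
              * ∏ i ∈ univ.erase j, (1 - (starRingEnd ℂ) (z i) * u))) := by rw [heval]
      _ = u * (∏ j, (u - z j)) + ∑ j, (u ^ 2 * (∏ i ∈ univ.erase j, (u - z i))
            + c * u * ((starRingEnd ℂ) (z j)
              * ∏ i ∈ univ.erase j, (1 - (starRingEnd ℂ) (z i) * u))) := by
          rw [Finset.sum_add_distrib, ← Finset.mul_sum, ← Finset.mul_sum]
          ring
      _ = u * (∏ j, (u - z j)) + ∑ j, (u * (∏ j, (u - z j))) * ((r j : ℝ) : ℂ) := by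
          rw [Finset.sum_congr rfl fun j _ => (hterm j).symm]
      _ = u * (∏ j, (u - z j)) * (((1 + ∑ j, r j : ℝ)) : ℂ) := by
          push_cast
          rw [mul_add, mul_one, Finset.mul_sum]
  intro h0
  rw [h0, mul_zero] at hsum
  have hne : u * (∏ j, (u - z j)) * (((1 + ∑ j, r j : ℝ)) : ℂ) ≠ 0 := by
    apply mul_ne_zero (mul_ne_zero hu0 hAune)
    exact Complex.ofReal_ne_zero.mpr (ne_of_gt hsumpos)
  exact hne hsum.symm

/-- For a finite Blaschke product `B` with `n` zeros in the open unit disk and `λ` on the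
unit circle, the equation `z·B(z) = conj λ` has exactly `n+1` distinct solutions, all on the
unit circle. -/
theorem blaschke_equation_solutions
    (n : ℕ) (z : Fin n → ℂ) (hz : ∀ j, ‖z j‖ < 1)
    (lam : ℂ) (hlam : ‖lam‖ = 1) :
    ∃ S : Finset ℂ, S.card = n + 1 ∧
      (∀ u : ℂ, (u * ∏ j, (u - z j) / (1 - (starRingEnd ℂ) (z j) * u)
          = (starRingEnd ℂ) lam) ↔ u ∈ S) ∧
      (∀ u ∈ S, ‖u‖ = 1) := by
  set c := (starRingEnd ℂ) lam with hcdef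
  have hc : ‖c‖ = 1 := by rw [hcdef, RCLike.norm_conj]; exact hlam
  have hc0 : c ≠ 0 := by intro h; rw [h] at hc; simp at hc
  set P := BPoly n z c with hP
  have hPmonic := BPoly_monic n z c
  have hP0 : P ≠ 0 := hPmonic.ne_zero
  -- root characterization
  have hroot_iff : ∀ u : ℂ, P.IsRoot u ↔
      u * ∏ j, (u - z j) = c * ∏ j, (1 - (starRingEnd ℂ) (z j) * u) := by
    intro u
    rw [IsRoot, hP, BPoly_eval, sub_eq_zero]
  have hnorm1 : ∀ u : ℂ, P.IsRoot u → ‖u‖ = 1 := fun u h =>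
    blaschke_root_norm_one z hz c hc u ((hroot_iff u).mp h)
  -- multiplicity one
  have hmult : ∀ u : ℂ, P.IsRoot u → P.rootMultiplicity u = 1 := by
    intro u h
    have h1 : 1 ≤ P.rootMultiplicity u := (rootMultiplicity_pos hP0).mpr h
    have h2 : ¬ 1 < P.rootMultiplicity u := by
      rw [one_lt_rootMultiplicity_iff_isRoot hP0]
      rintro ⟨-, hd⟩
      exact BPoly_deriv_ne_zero n z hz c hc u (hnorm1 u h)
        ((hroot_iff u).mp h) hd
    omega
  have hnodup : P.roots.Nodup := by
    rw [Multiset.nodup_iff_count_le_one]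
    intro a
    rw [count_roots]
    by_cases h : P.IsRoot a
    · rw [hmult a h]
    · rw [rootMultiplicity_eq_zero h]; exact Nat.zero_le 1
  have hcard : P.roots.toFinset.card = n + 1 := by
    have hsplit : Multiset.card P.roots = P.natDegree :=
      splits_iff_card_roots.mp (IsAlgClosed.splits P)
    rw [Multiset.toFinset_card_of_nodup hnodup, hsplit, hP, BPoly_natDegree]
  refine ⟨P.roots.toFinset, hcard, ?_, ?_⟩
  · intro u
    rw [Multiset.mem_toFinset, mem_roots hP0, hroot_iff]
    constructor
    · intro h
      -- show denominators nonzero, then clear them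
      have hd_ne : ∀ j, 1 - (starRingEnd ℂ) (z j) * u ≠ 0 := by
        intro j hj
        apply hc0
        rw [← h]
        rw [Finset.prod_eq_zero (mem_univ j) (by rw [hj, div_zero]), mul_zero]
      rw [Finset.prod_div_distrib] at h
      have hB0 : (∏ j, (1 - (starRingEnd ℂ) (z j) * u)) ≠ 0 :=
        Finset.prod_ne_zero_iff.mpr fun j _ => hd_ne j
      rw [mul_div_assoc', div_eq_iff hB0] at h
      linear_combination h
    · intro h
      have hu : ‖u‖ = 1 := blaschke_root_norm_one z hz c hc u h
      have hd_ne : ∀ j, 1 - (starRingEnd ℂ) (z j) * u ≠ 0 := by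
        intro j hj
        have h1 : (starRingEnd ℂ) (z j) * u = 1 := by linear_combination -hj
        have h2 : ‖(starRingEnd ℂ) (z j) * u‖ = 1 := by rw [h1]; simp
        rw [norm_mul, RCLike.norm_conj, hu, mul_one] at h2
        exact absurd h2 (ne_of_lt (hz j))
      rw [Finset.prod_div_distrib]
      have hB0 : (∏ j, (1 - (starRingEnd ℂ) (z j) * u)) ≠ 0 :=
        Finset.prod_ne_zero_iff.mpr fun j _ => hd_ne j
      rw [mul_div_assoc', div_eq_iff hB0]
      linear_combination h
  · intro u hu
    rw [Multiset.mem_toFinset, mem_roots hP0] at hu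
    exact hnorm1 u hu
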